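/- If the unbarred column word of L has Δ(a) < 0 for some barred a ∈ L|_μ, then Δ(b) = 0 for some barred b ∈ L|_μ. Consequently c_L ≥ 0: c_L has a vanishing factor whenever some factor y_i - y_j satisfies i < j. -/

import Mathlib

open scoped Classical
open MvPolynomial

noncomputable section

namespace EqLR

/-- Ambient polynomial ring `ℂ[x_1,…,x_d ; y_i (i ∈ ℤ)]`.
The variables `x_j` are indexed by `Fin d` (so `x_{j+1} = X (Sum.inl j)`), and the
variables `y_i` are indexed by `ℤ` (only positive indices actually occur). -/
abbrev P (d : ℕ) := MvPolynomial (Fin d ⊕ ℤ) ℂ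

/-- The variable `y_i`. -/
def yI (d : ℕ) (i : ℤ) : P d := X (Sum.inr i)

/-- The variable `x_v` for a value `v ∈ {1,…,d}` (junk value `0` otherwise). -/
def xv (d : ℕ) (v : ℕ) : P d :=
  if h : v - 1 < d then X (Sum.inl ⟨v - 1, h⟩) else 0

/-- The component `ξ_v` of a vector `ξ ∈ ℕ^d`, for a (1-based) value `v ∈ {1,…,d}`. -/
def vecAt {d : ℕ} (ξ : Fin d → ℕ) (v : ℕ) : ℕ :=
  if h : v - 1 < d then ξ ⟨v - 1, h⟩ else 0

/-- `μ ∈ ℕ^d` is a partition:  `μ_1 ≥ μ_2 ≥ … ≥ μ_d`. -/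
def IsPartitionVec {d : ℕ} (μ : Fin d → ℕ) : Prop :=
  ∀ i j : Fin d, i ≤ j → μ j ≤ μ i

/-- `|μ| = μ_1 + ⋯ + μ_d`. -/
def wt {d : ℕ} (μ : Fin d → ℕ) : ℕ := ∑ i, μ i

/-- `ρ = (d-1, d-2, …, 0)`. -/
def rho (d : ℕ) : Fin d → ℕ := fun i => d - 1 - (i : ℕ)

/-- Cells `(r, c)` (both 0-based) of the Young/reverse Young diagram whose row `r` has
length `μ_{r+1}`.  For the reverse diagram, rows are numbered bottom-to-top and columns
right-to-left; for the ordinary Young diagram, top-to-bottom and left-to-right. -/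
def cells (d : ℕ) (μ : Fin d → ℕ) : Finset (ℕ × ℕ) :=
  (Finset.range d ×ˢ Finset.range (Finset.univ.sup μ + 1)).filter
    fun rc => ∃ h : rc.1 < d, rc.2 < μ ⟨rc.1, h⟩

/-- In the column reading word of a *reverse* diagram (columns right-to-left, i.e. in
increasing 0-based column index, each column read top-to-bottom, i.e. in decreasing
0-based row index), the cell `b` is read strictly before the cell `a`. -/
def revBefore (a b : ℕ × ℕ) : Prop := b.2 < a.2 ∨ (b.2 = a.2 ∧ a.1 < b.1)

/-- In the column reading word of an ordinary Young diagram (rightmost column first,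
each column read top-to-bottom), the cell `b` is read strictly before the cell `a`. -/
def youngBefore (a b : ℕ × ℕ) : Prop := a.2 < b.2 ∨ (b.2 = a.2 ∧ b.1 < a.1)

/-- A reverse tableau of shape `μ`: entries in `{1,…,d}`, weakly increasing along rows
(left to right) and strictly increasing down columns (top to bottom). -/
structure RevTableau (d : ℕ) (μ : Fin d → ℕ) where
  val : ℕ × ℕ → ℕ
  mem : ∀ a ∈ cells d μ, 1 ≤ val a ∧ val a ≤ d
  zero : ∀ a ∉ cells d μ, val a = 0
  row : ∀ r c : ℕ, (r, c + 1) ∈ cells d μ → val (r, c + 1) ≤ val (r, c)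
  col : ∀ r c : ℕ, (r + 1, c) ∈ cells d μ → val (r + 1, c) < val (r, c)

/-- The factor `x_v - y_{(d+1-v) + c(a) - r(a)}` attached to an entry of value `v` in
the cell `a` of the reverse diagram (`c(a) = a.2 + 1`, `r(a) = a.1 + 1`, 1-based). -/
def factor (d : ℕ) (v : ℕ) (a : ℕ × ℕ) : P d :=
  xv d v - yI d ((d : ℤ) + 1 - (v : ℤ) + (a.2 : ℤ) - (a.1 : ℤ))

/-- The factorial Schur function `s_μ(x|y) = Σ_R (x|y)^R`. -/
def fSchur (d : ℕ) (μ : Fin d → ℕ) : P d :=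
  ∑ᶠ R : RevTableau d μ, ∏ a ∈ cells d μ, factor d (R.val a) a

/-- The ordinary Schur function `s_μ(x) = Σ_R x^R`. -/
def schurX (d : ℕ) (μ : Fin d → ℕ) : P d :=
  ∑ᶠ R : RevTableau d μ, ∏ a ∈ cells d μ, xv d (R.val a)

/-- The subalgebra `ℂ[y]` of polynomials in the `y` variables only. -/
def ySub (d : ℕ) : Subalgebra ℂ (P d) :=
  Algebra.adjoin ℂ (Set.range fun i : ℤ => yI d i)

/-- `p` is symmetric in the `x` variables. -/
def SymmX {d : ℕ} (p : P d) : Prop :=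
  ∀ σ : Equiv.Perm (Fin d), rename (⇑(Equiv.sumCongr σ (Equiv.refl ℤ))) p = p

/-- The falling factorial power `(x_j | y)^k = (x_j - y_1)⋯(x_j - y_k)`. -/
def ffPow (d : ℕ) (j : Fin d) (k : ℕ) : P d :=
  ∏ i ∈ Finset.range k, (X (Sum.inl j) - yI d ((i : ℤ) + 1))

/-- `(x|y)^ξ = (x_1|y)^{ξ_1} ⋯ (x_d|y)^{ξ_d}`. -/
def xyPow (d : ℕ) (ξ : Fin d → ℕ) : P d := ∏ j : Fin d, ffPow d j (ξ j)

/-- The alternant `a_ξ(x|y) = det[(x_j|y)^{ξ_i}]`. -/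
def aDet (d : ℕ) (ξ : Fin d → ℕ) : P d :=
  Matrix.det (Matrix.of fun i j : Fin d => ffPow d j (ξ i))

/-! ### Skew barred tableaux of shape `λ*μ` -/

/-- A skew barred tableau of shape `λ*μ`: the Young diagram `λ` (placed above and to
the right of the reverse diagram `μ`) is filled with values in `{1,…,d}` (field `top`),
the reverse diagram `μ` is filled with values in `{1,…,d}` (field `bot`), some of whose
cells may be barred (field `barred`); values weakly increase along rows left-to-right
and strictly increase down columns, ignoring bars. -/
structure SkewBarredTableau (d : ℕ) (lam mu : Fin d → ℕ) where
  top : ℕ × ℕ → ℕ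
  bot : ℕ × ℕ → ℕ
  barred : ℕ × ℕ → Prop
  top_mem : ∀ a ∈ cells d lam, 1 ≤ top a ∧ top a ≤ d
  top_zero : ∀ a ∉ cells d lam, top a = 0
  bot_mem : ∀ a ∈ cells d mu, 1 ≤ bot a ∧ bot a ≤ d
  bot_zero : ∀ a ∉ cells d mu, bot a = 0
  barred_sub : ∀ a, barred a → a ∈ cells d mu
  top_row : ∀ r c : ℕ, (r, c + 1) ∈ cells d lam → top (r, c) ≤ top (r, c + 1)
  top_col : ∀ r c : ℕ, (r + 1, c) ∈ cells d lam → top (r, c) < top (r + 1, c)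
  bot_row : ∀ r c : ℕ, (r, c + 1) ∈ cells d mu → bot (r, c + 1) ≤ bot (r, c)
  bot_col : ∀ r c : ℕ, (r + 1, c) ∈ cells d mu → bot (r + 1, c) < bot (r, c)

namespace SkewBarredTableau

variable {d : ℕ} {lam mu : Fin d → ℕ}

/-- `ω(L^u_{<a})_k`: the number of `k`'s among the unbarred entries of `L` read strictly
before the `μ`-cell `a` in the unbarred column word (all of `λ` is read before `μ`). -/
def countBefore (L : SkewBarredTableau d lam mu) (a : ℕ × ℕ) (k : ℕ) : ℕ :=
  ((cells d lam).filter fun b => L.top b = k).card +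
  ((cells d mu).filter fun b => ¬ L.barred b ∧ L.bot b = k ∧ revBefore a b).card

/-- `ω(L^u_{≤a})_k`: as `countBefore`, but the entry of `a` itself is also counted when
`a` is unbarred. -/
def countUpTo (L : SkewBarredTableau d lam mu) (a : ℕ × ℕ) (k : ℕ) : ℕ :=
  ((cells d lam).filter fun b => L.top b = k).card +
  ((cells d mu).filter fun b => ¬ L.barred b ∧ L.bot b = k ∧ (revBefore a b ∨ b = a)).card

/-- Prefix content within the `λ`-part of the word. -/
def topCountUpTo (L : SkewBarredTableau d lam mu) (a : ℕ × ℕ) (k : ℕ) : ℕ :=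
  ((cells d lam).filter fun b => L.top b = k ∧ (youngBefore a b ∨ b = a)).card

/-- `ω(L^u)_k`: total content of the unbarred column word of `L`. -/
def content (L : SkewBarredTableau d lam mu) (k : ℕ) : ℕ :=
  ((cells d lam).filter fun b => L.top b = k).card +
  ((cells d mu).filter fun b => ¬ L.barred b ∧ L.bot b = k).card

/-- The unbarred column word of `L` is Yamanouchi: every prefix contains at least as
many `k`'s as `(k+1)`'s, for every `k ≥ 1`. -/
def Yamanouchi (L : SkewBarredTableau d lam mu) : Prop :=
  (∀ a ∈ cells d lam, ∀ k : ℕ, 1 ≤ k → L.topCountUpTo a (k + 1) ≤ L.topCountUpTo a k) ∧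
  (∀ a ∈ cells d mu, ¬ L.barred a → ∀ k : ℕ, 1 ≤ k →
      L.countUpTo a (k + 1) ≤ L.countUpTo a k)

/-- `L` is an equivariant Littlewood–Richardson skew tableau of shape `λ*μ` and unbarred
content `ν`. -/
def IsLR (L : SkewBarredTableau d lam mu) (ν : Fin d → ℕ) : Prop :=
  L.Yamanouchi ∧ ∀ i : Fin d, L.content ((i : ℕ) + 1) = ν i

/-- The index `|a|' + ω(L^u_{<a})_{|a|}` of the first `y` in the factor of `c_L` at a
barred cell `a`. -/
def eIdx (L : SkewBarredTableau d lam mu) (a : ℕ × ℕ) : ℤ :=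
  ((d : ℤ) + 1 - (L.bot a : ℤ)) + (L.countBefore a (L.bot a) : ℤ)

/-- The index `|a|' + c(a) - r(a)` of the second `y` in the factor of `c_L` at a barred
cell `a`. -/
def fIdx (L : SkewBarredTableau d lam mu) (a : ℕ × ℕ) : ℤ :=
  ((d : ℤ) + 1 - (L.bot a : ℤ)) + (a.2 : ℤ) - (a.1 : ℤ)

/-- The weight `c_L = ∏_{a barred} (y_{|a|'+ω(L^u_{<a})_{|a|}} - y_{|a|'+c(a)-r(a)})`. -/
def cWt (L : SkewBarredTableau d lam mu) : P d :=
  ∏ a ∈ (cells d mu).filter (fun a => L.barred a), (yI d (L.eIdx a) - yI d (L.fIdx a))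

/-- `Δ(a) = ω(L^u_{≤a})_{|a|} - c(a) + r(a)`. -/
def Δ (L : SkewBarredTableau d lam mu) (a : ℕ × ℕ) : ℤ :=
  (L.countUpTo a (L.bot a) : ℤ) - ((a.2 : ℤ) + 1) + ((a.1 : ℤ) + 1)

end SkewBarredTableau

/-! ### Reverse barred tableaux -/

/-- A reverse barred tableau of shape `μ`. -/
structure RevBarredTableau (d : ℕ) (μ : Fin d → ℕ) where
  val : ℕ × ℕ → ℕ
  barred : ℕ × ℕ → Prop
  mem : ∀ a ∈ cells d μ, 1 ≤ val a ∧ val a ≤ d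
  zero : ∀ a ∉ cells d μ, val a = 0
  barred_sub : ∀ a, barred a → a ∈ cells d μ
  row : ∀ r c : ℕ, (r, c + 1) ∈ cells d μ → val (r, c + 1) ≤ val (r, c)
  col : ∀ r c : ℕ, (r + 1, c) ∈ cells d μ → val (r + 1, c) < val (r, c)

namespace RevBarredTableau

variable {d : ℕ} {μ : Fin d → ℕ}

/-- `ω(B^u_{<a})_k`. -/
def countBefore (B : RevBarredTableau d μ) (a : ℕ × ℕ) (k : ℕ) : ℕ :=
  ((cells d μ).filter fun b => ¬ B.barred b ∧ B.val b = k ∧ revBefore a b).card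

/-- `ω(B^u_{≤a})_k` (including `a` itself when unbarred). -/
def countUpTo (B : RevBarredTableau d μ) (a : ℕ × ℕ) (k : ℕ) : ℕ :=
  ((cells d μ).filter fun b => ¬ B.barred b ∧ B.val b = k ∧ (revBefore a b ∨ b = a)).card

/-- `ω(B^u)_k`. -/
def content (B : RevBarredTableau d μ) (k : ℕ) : ℕ :=
  ((cells d μ).filter fun b => ¬ B.barred b ∧ B.val b = k).card

/-- `e_{ξ,B}(a) = (ξ + ω(B^u_{<a}))_{|a|}`. -/
def eIdx (B : RevBarredTableau d μ) (ξ : Fin d → ℕ) (a : ℕ × ℕ) : ℤ :=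
  (vecAt ξ (B.val a) : ℤ) + (B.countBefore a (B.val a) : ℤ)

/-- `f_B(a) = |a|' + c(a) - r(a)`. -/
def fIdx (B : RevBarredTableau d μ) (a : ℕ × ℕ) : ℤ :=
  ((d : ℤ) + 1 - (B.val a : ℤ)) + (a.2 : ℤ) - (a.1 : ℤ)

/-- `c_{ξ,B} = ∏_{a barred} (y_{e_{ξ,B}(a)} - y_{f_B(a)})`. -/
def cXi (B : RevBarredTableau d μ) (ξ : Fin d → ℕ) : P d :=
  ∏ a ∈ (cells d μ).filter (fun a => B.barred a), (yI d (B.eIdx ξ a) - yI d (B.fIdx a))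

/-- The unbarred column word of `λ*B` is Yamanouchi (the `λ`-part is the canonical
filling of `λ`, whose whole content `λ` is added to every prefix of `B^u`). -/
def StarYam (B : RevBarredTableau d μ) (lam : Fin d → ℕ) : Prop :=
  ∀ a ∈ cells d μ, ¬ B.barred a → ∀ k : ℕ, 1 ≤ k →
    vecAt lam (k + 1) + B.countUpTo a (k + 1) ≤ vecAt lam k + B.countUpTo a k

end RevBarredTableau

/-! ### Reverse hatted tableaux -/

/-- A hat decoration: none, left hat, or right hat. -/
inductive Hat where
  | unhatted : Hat
  | left : Hat
  | right : Hat
deriving DecidableEq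

/-- A reverse hatted tableau of shape `μ`. -/
structure RevHattedTableau (d : ℕ) (μ : Fin d → ℕ) where
  val : ℕ × ℕ → ℕ
  hat : ℕ × ℕ → Hat
  mem : ∀ a ∈ cells d μ, 1 ≤ val a ∧ val a ≤ d
  zero : ∀ a ∉ cells d μ, val a = 0
  hat_out : ∀ a ∉ cells d μ, hat a = Hat.unhatted
  row : ∀ r c : ℕ, (r, c + 1) ∈ cells d μ → val (r, c + 1) ≤ val (r, c)
  col : ∀ r c : ℕ, (r + 1, c) ∈ cells d μ → val (r + 1, c) < val (r, c)

namespace RevHattedTableau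

variable {d : ℕ} {μ : Fin d → ℕ}

/-- `ω(H^u_{<a})_k`: content of the unhatted column word of `H` read before `a`. -/
def countBefore (H : RevHattedTableau d μ) (a : ℕ × ℕ) (k : ℕ) : ℕ :=
  ((cells d μ).filter fun b => H.hat b = Hat.unhatted ∧ H.val b = k ∧ revBefore a b).card

/-- `ω(H^u)_k`. -/
def content (H : RevHattedTableau d μ) (k : ℕ) : ℕ :=
  ((cells d μ).filter fun b => H.hat b = Hat.unhatted ∧ H.val b = k).card

/-- `e_{ξ,H}(a) = (ξ + ω(H^u_{<a}))_{|a|}`. -/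
def eIdx (H : RevHattedTableau d μ) (ξ : Fin d → ℕ) (a : ℕ × ℕ) : ℤ :=
  (vecAt ξ (H.val a) : ℤ) + (H.countBefore a (H.val a) : ℤ)

/-- `f_H(a) = |a|' + c(a) - r(a)`. -/
def fIdx (H : RevHattedTableau d μ) (a : ℕ × ℕ) : ℤ :=
  ((d : ℤ) + 1 - (H.val a : ℤ)) + (a.2 : ℤ) - (a.1 : ℤ)

/-- `d_{ξ,H} = ∏_{a ∈ H^l} y_{e_{ξ,H}(a)} · ∏_{a ∈ H^r} (-y_{f_H(a)})`. -/
def dWt (H : RevHattedTableau d μ) (ξ : Fin d → ℕ) : P d :=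
  (∏ a ∈ (cells d μ).filter (fun a => H.hat a = Hat.left), yI d (H.eIdx ξ a)) *
  ∏ a ∈ (cells d μ).filter (fun a => H.hat a = Hat.right), (-(yI d (H.fIdx a)))

end RevHattedTableau

/-- `H̄ = B`: `H` unbars to the reverse barred tableau `B`. -/
def UnbarsTo {d : ℕ} {μ : Fin d → ℕ} (H : RevHattedTableau d μ)
    (B : RevBarredTableau d μ) : Prop :=
  H.val = B.val ∧ ∀ a, (H.hat a ≠ Hat.unhatted ↔ B.barred a)

/-- The simple transposition `σ_i` on values: exchanges `i` and `i+1`. -/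
def swapVal (i v : ℕ) : ℕ := if v = i then i + 1 else if v = i + 1 then i else v

/-- The action of `σ_i` on `ℕ^d` by permuting coordinates. -/
def swapVec {d : ℕ} (i : ℕ) (ξ : Fin d → ℕ) : Fin d → ℕ :=
  fun j => vecAt ξ (swapVal i ((j : ℕ) + 1))

/-! ### Reverse (barred) subtableaux -/

/-- A reverse subtableau of shape `μ`: each cell is empty (value `0`) or carries a value
in `{1,…,d}`; no row or column conditions. -/
structure RevSubTableau (d : ℕ) (μ : Fin d → ℕ) where
  val : ℕ × ℕ → ℕ
  mem : ∀ a ∈ cells d μ, val a ≤ d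
  zero : ∀ a ∉ cells d μ, val a = 0

/-- A reverse barred subtableau of shape `μ`: a reverse subtableau some of whose filled
cells are barred. -/
structure RevBarredSubTableau (d : ℕ) (μ : Fin d → ℕ) where
  val : ℕ × ℕ → ℕ
  barred : ℕ × ℕ → Prop
  mem : ∀ a ∈ cells d μ, val a ≤ d
  zero : ∀ a ∉ cells d μ, val a = 0
  barred_filled : ∀ a, barred a → a ∈ cells d μ ∧ val a ≠ 0

/-- `(x|y)^R` for a reverse subtableau `R`. -/
def RevSubTableau.xyProd {d : ℕ} {μ : Fin d → ℕ} (R : RevSubTableau d μ) : P d :=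
  ∏ a ∈ (cells d μ).filter (fun a => R.val a ≠ 0), factor d (R.val a) a

namespace RevBarredSubTableau

variable {d : ℕ} {μ : Fin d → ℕ}

/-- `ω(B^u_{<a})_k`: unbarred filled entries of value `k` read before `a`. -/
def countBefore (B : RevBarredSubTableau d μ) (a : ℕ × ℕ) (k : ℕ) : ℕ :=
  ((cells d μ).filter fun b => ¬ B.barred b ∧ B.val b = k ∧ revBefore a b).card

/-- `ω(B^u)_k`. -/
def content (B : RevBarredSubTableau d μ) (k : ℕ) : ℕ :=
  ((cells d μ).filter fun b => ¬ B.barred b ∧ B.val b = k).card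

/-- `e_{ξ,B}(a) = (ξ + ω(B^u_{<a}))_{|a|}`. -/
def eIdx (B : RevBarredSubTableau d μ) (ξ : Fin d → ℕ) (a : ℕ × ℕ) : ℤ :=
  (vecAt ξ (B.val a) : ℤ) + (B.countBefore a (B.val a) : ℤ)

/-- `f_B(a) = |a|' + c(a) - r(a)`. -/
def fIdx (B : RevBarredSubTableau d μ) (a : ℕ × ℕ) : ℤ :=
  ((d : ℤ) + 1 - (B.val a : ℤ)) + (a.2 : ℤ) - (a.1 : ℤ)

/-- `c_{ξ,B}`. -/
def cXi (B : RevBarredSubTableau d μ) (ξ : Fin d → ℕ) : P d :=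
  ∏ a ∈ (cells d μ).filter (fun a => B.barred a), (yI d (B.eIdx ξ a) - yI d (B.fIdx a))

end RevBarredSubTableau

end EqLR

namespace EqLR

section Aux

variable {d : ℕ} {lam mu : Fin d → ℕ}

lemma mem_cells {μ : Fin d → ℕ} {a : ℕ × ℕ} :
    a ∈ cells d μ ↔ ∃ h : a.1 < d, a.2 < μ ⟨a.1, h⟩ := by
  constructor
  · intro h
    exact (Finset.mem_filter.mp h).2
  · rintro ⟨h1, h2⟩
    refine Finset.mem_filter.mpr ⟨Finset.mem_product.mpr
      ⟨Finset.mem_range.mpr h1, Finset.mem_range.mpr ?_⟩, h1, h2⟩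
    exact lt_of_lt_of_le h2 (le_trans (Finset.le_sup (Finset.mem_univ _)) (Nat.le_succ _))

lemma revBefore_trans {a b c : ℕ × ℕ} (h1 : revBefore a b) (h2 : revBefore b c) :
    revBefore a c := by
  unfold revBefore at *; omega

lemma revBefore_irrefl {a : ℕ × ℕ} : ¬ revBefore a a := by
  unfold revBefore; omega

namespace SkewBarredTableau

/-- For a barred cell, `countUpTo = countBefore`. -/
lemma countUpTo_eq_countBefore (L : SkewBarredTableau d lam mu) {a : ℕ × ℕ}
    (ha : L.barred a) (m : ℕ) : L.countUpTo a m = L.countBefore a m := by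
  unfold SkewBarredTableau.countUpTo SkewBarredTableau.countBefore
  congr 1
  refine congrArg Finset.card (Finset.filter_congr ?_)
  intro b _
  constructor
  · rintro ⟨h1, h2, (h3 | rfl)⟩
    · exact ⟨h1, h2, h3⟩
    · exact absurd ha h1
  · rintro ⟨h1, h2, h3⟩
    exact ⟨h1, h2, Or.inl h3⟩

lemma delta_barred (L : SkewBarredTableau d lam mu) {a : ℕ × ℕ} (ha : L.barred a) :
    L.Δ a = (L.countBefore a (L.bot a) : ℤ) - (a.2 : ℤ) + (a.1 : ℤ) := by
  unfold SkewBarredTableau.Δ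
  rw [L.countUpTo_eq_countBefore ha]
  ring

lemma eIdx_sub_fIdx (L : SkewBarredTableau d lam mu) {a : ℕ × ℕ} (ha : L.barred a) :
    L.eIdx a - L.fIdx a = L.Δ a := by
  rw [L.delta_barred ha]
  unfold SkewBarredTableau.eIdx SkewBarredTableau.fIdx
  ring

/-- The prefix contents of the unbarred word of `L` are weakly decreasing in the
value `k`, for every position (key consequence of Yamanouchi). -/
lemma countBefore_succ_le (L : SkewBarredTableau d lam mu) (hY : L.Yamanouchi)
    (a : ℕ × ℕ) (k : ℕ) (hk : 1 ≤ k) :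
    L.countBefore a (k + 1) ≤ L.countBefore a k := by
  classical
  set S := (cells d mu).filter (fun b => ¬ L.barred b ∧ revBefore a b) with hS
  rcases S.eq_empty_or_nonempty with hSe | hSne
  · -- no unbarred μ-cell is read before `a`: reduce to the λ-part
    have hz : ∀ m, ((cells d mu).filter
        fun b => ¬ L.barred b ∧ L.bot b = m ∧ revBefore a b).card = 0 := by
      intro m
      rw [Finset.card_eq_zero, Finset.eq_empty_iff_forall_notMem]
      intro b hb
      have hb' := Finset.mem_filter.mp hb
      have hbS : b ∈ S := Finset.mem_filter.mpr ⟨hb'.1, hb'.2.1, hb'.2.2.2⟩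
      rw [hSe] at hbS
      exact absurd hbS (Finset.notMem_empty b)
    unfold SkewBarredTableau.countBefore
    rw [hz, hz]
    simp only [add_zero]
    rcases (cells d lam).eq_empty_or_nonempty with hLe | hLne
    · simp [hLe]
    · obtain ⟨b0, hb0, hmax⟩ := Finset.exists_max_image (cells d lam) (fun b => b.1) hLne
      have hb0c : ((b0.1 : ℕ), (0 : ℕ)) ∈ cells d lam := by
        obtain ⟨h1, h2⟩ := mem_cells.mp hb0
        exact mem_cells.mpr ⟨h1, lt_of_le_of_lt (Nat.zero_le _) h2⟩
      have hlast : ∀ b ∈ cells d lam, youngBefore (b0.1, 0) b ∨ b = (b0.1, 0) := by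
        intro b hb
        have hble := hmax b hb
        unfold youngBefore
        by_cases hb2 : 0 < b.2
        · exact Or.inl (Or.inl hb2)
        · have hb2' : b.2 = 0 := by omega
          rcases lt_or_eq_of_le hble with h | h
          · exact Or.inl (Or.inr ⟨hb2', h⟩)
          · right
            exact Prod.ext h hb2'
      have hTeq : ∀ m, ((cells d lam).filter fun b => L.top b = m).card =
          L.topCountUpTo (b0.1, 0) m := by
        intro m
        unfold SkewBarredTableau.topCountUpTo
        refine congrArg Finset.card (Finset.filter_congr ?_)
        intro b hb
        constructor
        · intro h; exact ⟨h, hlast b hb⟩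
        · intro h; exact h.1
      rw [hTeq, hTeq]
      exact hY.1 (b0.1, 0) hb0c k hk
  · -- there is a last unbarred μ-cell `bs` read before `a`
    obtain ⟨b1, hb1, hmax1⟩ := Finset.exists_max_image S (fun b => b.2) hSne
    have hS1 : (S.filter (fun b => b.2 = b1.2)).Nonempty :=
      ⟨b1, Finset.mem_filter.mpr ⟨hb1, rfl⟩⟩
    obtain ⟨bs, hbs, hmin⟩ := Finset.exists_min_image _ (fun b => b.1) hS1
    have hbsS : bs ∈ S := (Finset.mem_filter.mp hbs).1
    have hbs2 : bs.2 = b1.2 := (Finset.mem_filter.mp hbs).2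
    obtain ⟨hbsc, hbsub, hbsrev⟩ : bs ∈ cells d mu ∧ ¬ L.barred bs ∧ revBefore a bs := by
      have h := Finset.mem_filter.mp hbsS
      exact ⟨h.1, h.2.1, h.2.2⟩
    have hbsmax : ∀ b ∈ S, b = bs ∨ revBefore bs b := by
      intro b hbS
      by_cases hx : b = bs
      · exact Or.inl hx
      · right
        have h2 : b.2 ≤ bs.2 := by rw [hbs2]; exact hmax1 b hbS
        rcases lt_or_eq_of_le h2 with h | h
        · exact Or.inl h
        · have h1 : bs.1 ≤ b.1 := by
            refine hmin b (Finset.mem_filter.mpr ⟨hbS, ?_⟩)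
            rw [h, hbs2]
          rcases lt_or_eq_of_le h1 with h' | h'
          · exact Or.inr ⟨h, h'⟩
          · exact absurd (Prod.ext h'.symm h) hx
    have key : ∀ m, L.countBefore a m = L.countUpTo bs m := by
      intro m
      unfold SkewBarredTableau.countBefore SkewBarredTableau.countUpTo
      congr 1
      refine congrArg Finset.card (Finset.filter_congr ?_)
      intro b hb
      constructor
      · rintro ⟨h1, h2, h3⟩
        refine ⟨h1, h2, ?_⟩
        rcases hbsmax b (Finset.mem_filter.mpr ⟨hb, h1, h3⟩) with h | h
        · exact Or.inr h
        · exact Or.inl h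
      · rintro ⟨h1, h2, (h3 | rfl)⟩
        · exact ⟨h1, h2, revBefore_trans hbsrev h3⟩
        · exact ⟨h1, h2, hbsrev⟩
    rw [key, key]
    exact hY.2 bs hbsc hbsub k hk

lemma countBefore_anti (L : SkewBarredTableau d lam mu) (hY : L.Yamanouchi)
    (a : ℕ × ℕ) {k k' : ℕ} (hk : 1 ≤ k) (hkk : k ≤ k') :
    L.countBefore a k' ≤ L.countBefore a k := by
  induction k', hkk using Nat.le_induction with
  | base => exact le_refl _
  | succ n hn ih =>
      exact le_trans (L.countBefore_succ_le hY a n (le_trans hk hn)) ih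

lemma countBefore_mono_cell (L : SkewBarredTableau d lam mu) (r j m : ℕ) :
    L.countBefore (r, j) m ≤ L.countBefore (r, j + 1) m := by
  unfold SkewBarredTableau.countBefore
  apply Nat.add_le_add_left
  apply Finset.card_le_card
  intro b hb
  obtain ⟨hbc, h1, h2, h3⟩ := Finset.mem_filter.mp hb
  refine Finset.mem_filter.mpr ⟨hbc, h1, h2, ?_⟩
  unfold revBefore at h3 ⊢
  simp only at h3 ⊢
  omega

lemma countBefore_succ_col (L : SkewBarredTableau d lam mu) {r j : ℕ}
    (hcell : (r, j) ∈ cells d mu) (hub : ¬ L.barred (r, j)) :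
    L.countBefore (r, j) (L.bot (r, j)) + 1 ≤
      L.countBefore (r, j + 1) (L.bot (r, j)) := by
  classical
  unfold SkewBarredTableau.countBefore
  rw [add_assoc]
  apply Nat.add_le_add_left
  set v := L.bot (r, j) with hv
  have hsub : insert (r, j)
      ((cells d mu).filter fun b => ¬ L.barred b ∧ L.bot b = v ∧ revBefore (r, j) b) ⊆
      ((cells d mu).filter fun b => ¬ L.barred b ∧ L.bot b = v ∧ revBefore (r, j + 1) b) := by
    intro b hb
    rcases Finset.mem_insert.mp hb with rfl | hb
    · refine Finset.mem_filter.mpr ⟨hcell, hub, rfl, ?_⟩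
      unfold revBefore
      simp only
      omega
    · have h := Finset.mem_filter.mp hb
      refine Finset.mem_filter.mpr ⟨h.1, h.2.1, h.2.2.1, ?_⟩
      have h3 := h.2.2.2
      unfold revBefore at h3 ⊢
      simp only at h3 ⊢
      omega
  have hnot : (r, j) ∉
      ((cells d mu).filter fun b => ¬ L.barred b ∧ L.bot b = v ∧ revBefore (r, j) b) := by
    intro h
    exact revBefore_irrefl (Finset.mem_filter.mp h).2.2.2
  calc ((cells d mu).filter fun b => ¬ L.barred b ∧ L.bot b = v ∧ revBefore (r, j) b).card + 1
      = (insert (r, j) ((cells d mu).filter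
          fun b => ¬ L.barred b ∧ L.bot b = v ∧ revBefore (r, j) b)).card := by
        rw [Finset.card_insert_of_notMem hnot]
    _ ≤ _ := Finset.card_le_card hsub

end SkewBarredTableau

end Aux

/-- If `Δ(a) < 0` for some barred `a ∈ L|_μ`, then `Δ(b) = 0` for some
barred `b ∈ L|_μ`.  Consequently `c_L ≥ 0`: whenever some factor `y_i - y_j` of `c_L`
has `i < j`, some factor of `c_L` vanishes. -/
theorem delta_neg_implies_zero (d : ℕ) (hd : 1 ≤ d)
    (lam mu nu : Fin d → ℕ)
    (hlam : IsPartitionVec lam) (hmu : IsPartitionVec mu) (hnu : IsPartitionVec nu)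
    (L : SkewBarredTableau d lam mu) (hL : L.IsLR nu) :
    ((∃ a ∈ cells d mu, L.barred a ∧ L.Δ a < 0) →
      ∃ b ∈ cells d mu, L.barred b ∧ L.Δ b = 0) ∧
    ((∃ a ∈ cells d mu, L.barred a ∧ L.eIdx a < L.fIdx a) →
      ∃ b ∈ cells d mu, L.barred b ∧ L.eIdx b = L.fIdx b) := by
  obtain ⟨hY, -⟩ := hL
  have main : (∃ a ∈ cells d mu, L.barred a ∧ L.Δ a < 0) →
      ∃ b ∈ cells d mu, L.barred b ∧ L.Δ b = 0 := by
    rintro ⟨a, ha, hab, hΔ⟩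
    set E : ℕ → ℤ := fun j =>
      (L.countBefore (a.1, j) (L.bot (a.1, j)) : ℤ) - (j : ℤ) + (a.1 : ℤ) with hE
    have hcell : ∀ j ≤ a.2, (a.1, j) ∈ cells d mu := by
      intro j hj
      obtain ⟨h1, h2⟩ := mem_cells.mp ha
      exact mem_cells.mpr ⟨h1, lt_of_le_of_lt hj h2⟩
    have hEc : E a.2 < 0 := by
      have hd' := L.delta_barred hab
      show (L.countBefore a (L.bot a) : ℤ) - (a.2 : ℤ) + (a.1 : ℤ) < 0
      omega
    have hstep : ∀ j, j + 1 ≤ a.2 →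
        (E j - 1 ≤ E (j + 1)) ∧ (¬ L.barred (a.1, j) → E j ≤ E (j + 1)) := by
      intro j hj
      have hc1 : (a.1, j + 1) ∈ cells d mu := hcell _ hj
      have hc0 : (a.1, j) ∈ cells d mu := hcell _ (by omega)
      have hrow : L.bot (a.1, j + 1) ≤ L.bot (a.1, j) := L.bot_row a.1 j hc1
      have hv1 : 1 ≤ L.bot (a.1, j + 1) := (L.bot_mem _ hc1).1
      have h1 : L.countBefore (a.1, j + 1) (L.bot (a.1, j)) ≤
          L.countBefore (a.1, j + 1) (L.bot (a.1, j + 1)) :=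
        L.countBefore_anti hY _ hv1 hrow
      have h2 : L.countBefore (a.1, j) (L.bot (a.1, j)) ≤
          L.countBefore (a.1, j + 1) (L.bot (a.1, j)) :=
        L.countBefore_mono_cell a.1 j _
      constructor
      · simp only [hE]; omega
      · intro hub
        have h3 := L.countBefore_succ_col hc0 hub
        simp only [hE]; omega
    have claim : ∀ n j, j + n = a.2 → 0 ≤ E j →
        ∃ b ∈ cells d mu, L.barred b ∧ L.Δ b = 0 := by
      intro n
      induction n with
      | zero =>
          intro j hj hEj
          exfalso
          have hj' : j = a.2 := by omega
          rw [hj'] at hEj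
          omega
      | succ n ih =>
          intro j hj hEj
          by_cases h : 0 ≤ E (j + 1)
          · exact ih (j + 1) (by omega) h
          · push_neg at h
            have hbar : L.barred (a.1, j) := by
              by_contra hub
              have := (hstep j (by omega)).2 hub
              omega
            refine ⟨(a.1, j), hcell j (by omega), hbar, ?_⟩
            have h1 := (hstep j (by omega)).1
            have hEj0 : E j = 0 := by omega
            rw [L.delta_barred hbar]
            simp only [hE] at hEj0
            exact hEj0
    have hE0 : 0 ≤ E 0 := by
      simp only [hE]
      omega
    exact claim a.2 0 (by omega) hE0
  refine ⟨main, ?_⟩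
  rintro ⟨a, ha, hab, hlt⟩
  have h1 : L.Δ a < 0 := by
    have := L.eIdx_sub_fIdx hab
    omega
  obtain ⟨b, hb, hbb, hb0⟩ := main ⟨a, ha, hab, h1⟩
  refine ⟨b, hb, hbb, ?_⟩
  have := L.eIdx_sub_fIdx hbb
  omega

end EqLR
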